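/- Let X be a Banach space and suppose there exists a Lipschitz map f : X → ℓ_∞ which is almost uncollapsed. Then X Lipschitz embeds into ℓ_∞, i.e., there exist a map F : X → ℓ_∞ and constants c, C > 0 such that c‖x−y‖ ≤ ‖F(x) − F(y)‖ ≤ C‖x−y‖ for all x,y ∈ X. -/
import Mathlib


open Metric
open scoped ENNReal NNReal

/-- Exact compression modulus. -/
noncomputable def exactComp {M N : Type*} [PseudoMetricSpace M] [PseudoMetricSpace N]
    (f : M → N) (t : ℝ) : ℝ :=
  sInf {r : ℝ | ∃ x y : M, dist x y = t ∧ dist (f x) (f y) = r}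

/-- Coarse map: the expansion modulus is finite for every t. -/
def Coarse {M N : Type*} [PseudoMetricSpace M] [PseudoMetricSpace N] (f : M → N) : Prop :=
  ∀ t : ℝ, ∃ C : ℝ, ∀ x y : M, dist x y ≤ t → dist (f x) (f y) ≤ C

/-- Solvent map. -/
def Solvent {M N : Type*} [PseudoMetricSpace M] [PseudoMetricSpace N] (f : M → N) : Prop :=
  ∀ n : ℕ, ∃ R : ℝ, 0 < R ∧ ∀ x y : M,
    dist x y ∈ Set.Icc R (R + (n : ℝ)) → (n : ℝ) < dist (f x) (f y)

/-- Almost uncollapsed map. -/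
noncomputable def AlmostUncollapsed {M N : Type*} [PseudoMetricSpace M] [PseudoMetricSpace N]
    (f : M → N) : Prop :=
  ∃ t : ℝ, 0 < t ∧ 0 < exactComp f t

set_option maxHeartbeats 1000000
set_option synthInstance.maxHeartbeats 200000

/-- If there is a Lipschitz almost uncollapsed map X → ℓ_∞, then X Lipschitz embeds
into ℓ_∞. -/
theorem lipschitz_embeds_into_linfty_of_lipschitz_almostUncollapsed
    {X : Type*} [NormedAddCommGroup X] [NormedSpace ℝ X] [CompleteSpace X]
    (f : X → lp (fun _ : ℕ => ℝ) ⊤) (hf : ∃ K : ℝ≥0, LipschitzWith K f)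
    (hu : AlmostUncollapsed f) :
    ∃ (F : X → lp (fun _ : ℕ => ℝ) ⊤) (c C : ℝ), 0 < c ∧ 0 < C ∧
      ∀ x y : X, c * ‖x - y‖ ≤ ‖F x - F y‖ ∧ ‖F x - F y‖ ≤ C * ‖x - y‖ := by
  obtain ⟨K, hK⟩ := hf
  obtain ⟨t₀, ht₀, hρ⟩ := hu
  set ρ := exactComp f t₀ with hρdef
  have key : ∀ u v : X, dist u v = t₀ → ρ ≤ dist (f u) (f v) := by
    intro u v h
    refine csInf_le ⟨0, ?_⟩ ⟨u, v, h, rfl⟩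
    rintro r ⟨a, b, -, rfl⟩; exact dist_nonneg
  set Kr : ℝ := (K : ℝ) + 1 with hKrdef
  have hKr0 : (0:ℝ) < Kr := by positivity
  have hlip : ∀ a b : X, ‖f a - f b‖ ≤ Kr * ‖a - b‖ := by
    intro a b
    have h1 := hK.dist_le_mul a b
    rw [dist_eq_norm, dist_eq_norm] at h1
    nlinarith [norm_nonneg (a - b)]
  -- the index equivalence
  let e : ℚ × ℕ ≃ ℕ := Denumerable.eqv (ℚ × ℕ)
  let c : ℕ → ℝ := fun n => |(((e.symm n).1 : ℚ) : ℝ)|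
  have hc : ∀ n, 0 ≤ c n := fun n => abs_nonneg _
  let h : X → ℕ → ℝ := fun x n => (f (c n • x) (e.symm n).2 - f 0 (e.symm n).2) / c n
  have hdiff : ∀ x y : X, ∀ n, h x n - h y n
      = (f (c n • x) (e.symm n).2 - f (c n • y) (e.symm n).2) / c n := by
    intro x y n; simp only [h]; ring
  have hbound : ∀ x y : X, ∀ n, |h x n - h y n| ≤ Kr * ‖x - y‖ := by
    intro x y n
    rw [hdiff]
    rcases eq_or_lt_of_le (hc n) with hc0 | hc0
    · simp [← hc0]
      exact mul_nonneg hKr0.le (norm_nonneg _)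
    · rw [abs_div, abs_of_pos hc0, div_le_iff₀ hc0]
      have h1 : |f (c n • x) (e.symm n).2 - f (c n • y) (e.symm n).2|
          ≤ ‖f (c n • x) - f (c n • y)‖ := by
        have h0 := lp.norm_apply_le_norm (ENNReal.top_ne_zero)
          (f (c n • x) - f (c n • y)) (e.symm n).2
        rw [lp.coeFn_sub] at h0
        exact h0
      have h2 : ‖f (c n • x) - f (c n • y)‖ ≤ Kr * ‖x - y‖ * c n := by
        calc ‖f (c n • x) - f (c n • y)‖ ≤ Kr * ‖c n • x - c n • y‖ := hlip _ _
        _ = Kr * ‖x - y‖ * c n := by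
            rw [← smul_sub, norm_smul, Real.norm_eq_abs, abs_of_pos hc0]; ring
      linarith
  have hzero : ∀ n, h (0:X) n = 0 := by
    intro n; simp [h]
  have hmem : ∀ x : X, Memℓp (h x) ∞ := by
    intro x
    apply memℓp_infty
    refine ⟨Kr * ‖x‖, ?_⟩
    rintro r ⟨n, rfl⟩
    have := hbound x 0 n
    rw [hzero n] at this
    simpa using this
  let F : X → lp (fun _ : ℕ => ℝ) ⊤ := fun x => ⟨h x, hmem x⟩
  have hFcoe : ∀ x : X, ∀ n, (F x : ∀ _ : ℕ, ℝ) n = h x n := fun x n => rfl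
  have hFsub : ∀ x y : X, ∀ n, (F x - F y : lp (fun _ : ℕ => ℝ) ⊤) n = h x n - h y n := by
    intro x y n
    rw [lp.coeFn_sub]; rfl
  refine ⟨F, ρ / (2 * t₀), Kr, div_pos hρ (by linarith), hKr0, ?_⟩
  intro x y
  constructor
  · -- lower bound
    rcases eq_or_ne x y with rfl | hxy
    · rw [sub_self, sub_self, norm_zero, norm_zero, mul_zero]
    have hs : 0 < ‖x - y‖ := by
      rw [norm_pos_iff, sub_ne_zero]; exact hxy
    set s := ‖x - y‖ with hsdef
    set ε : ℝ := min (ρ / (2 * Kr)) (t₀ / 2) with hεdef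
    have hε0 : 0 < ε := by
      apply lt_min
      · exact div_pos hρ (by linarith)
      · linarith
    have hεle : ε ≤ ρ / (2 * Kr) := min_le_left _ _
    have hεt : ε ≤ t₀ / 2 := min_le_right _ _
    obtain ⟨q, hq1, hq2⟩ := exists_rat_btwn (show (t₀ - ε) / s < t₀ / s by
      gcongr
      linarith)
    have hq0 : 0 < (q : ℝ) := lt_trans (by apply div_pos <;> linarith) hq1
    set d : ℝ := (q : ℝ) * s with hddef
    have hd1 : t₀ - ε < d := by
      rw [div_lt_iff₀ hs] at hq1; linarith
    have hd2 : d < t₀ := by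
      rw [lt_div_iff₀ hs] at hq2; linarith
    have hd0 : 0 < d := by linarith
    set u : X := (q : ℝ) • x with hudef
    set v : X := (q : ℝ) • y with hvdef
    have huv : ‖u - v‖ = d := by
      rw [hudef, hvdef, ← smul_sub, norm_smul, Real.norm_eq_abs, abs_of_pos hq0]
    set w : X := u + (t₀ / d) • (v - u) with hwdef
    have hvu : ‖v - u‖ = d := by rw [norm_sub_rev]; exact huv
    have huw : dist u w = t₀ := by
      rw [dist_eq_norm, hwdef]
      have : u - (u + (t₀ / d) • (v - u)) = -((t₀ / d) • (v - u)) := by abel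
      rw [this, norm_neg, norm_smul, Real.norm_eq_abs, hvu,
        abs_of_pos (div_pos ht₀ hd0), div_mul_cancel₀ _ (ne_of_gt hd0)]
    have hwv : ‖w - v‖ = t₀ - d := by
      rw [hwdef]
      have : u + (t₀ / d) • (v - u) - v = (t₀ / d - 1) • (v - u) := by module
      rw [this, norm_smul, Real.norm_eq_abs, hvu,
        abs_of_pos (by rw [sub_pos, lt_div_iff₀ hd0]; linarith)]
      field_simp
    have hfuw : ρ ≤ ‖f u - f w‖ := by
      have := key u w huw
      rwa [dist_eq_norm] at this
    have hfwv : ‖f w - f v‖ ≤ ρ / 2 := by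
      have h1 : ‖f w - f v‖ ≤ Kr * (t₀ - d) := by
        have := hlip w v; rwa [hwv] at this
      have h2 : Kr * (t₀ - d) ≤ Kr * ε := by nlinarith
      have h3 : Kr * ε ≤ ρ / 2 := by
        rw [le_div_iff₀ (by positivity : (0:ℝ) < 2 * Kr)] at hεle
        nlinarith
      exact h1.trans (h2.trans h3)
    have hfuv : ρ / 2 ≤ ‖f u - f v‖ := by
      have htri : ‖f u - f w‖ ≤ ‖f u - f v‖ + ‖f v - f w‖ := by
        have := dist_triangle (f u) (f v) (f w)
        rwa [dist_eq_norm, dist_eq_norm, dist_eq_norm] at this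
      have : ‖f v - f w‖ = ‖f w - f v‖ := norm_sub_rev _ _
      linarith
    have hkey2 : ‖f u - f v‖ ≤ (q : ℝ) * ‖F x - F y‖ := by
      apply lp.norm_le_of_forall_le (mul_nonneg hq0.le (norm_nonneg _))
      intro k
      set n := e (q, k) with hndef
      have hn : e.symm n = (q, k) := Equiv.symm_apply_apply e (q, k)
      have hcn : c n = (q : ℝ) := by
        show |(((e.symm n).1 : ℚ) : ℝ)| = (q : ℝ)
        rw [hn]; exact abs_of_pos hq0
      have hcoord : ((f u - f v : lp (fun _ : ℕ => ℝ) ⊤) : ∀ _ : ℕ, ℝ) k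
          = (q : ℝ) * (h x n - h y n) := by
        rw [hdiff, hcn, hn]
        rw [lp.coeFn_sub]
        simp only [Pi.sub_apply, hudef, hvdef]
        field_simp
      have hle : |h x n - h y n| ≤ ‖F x - F y‖ := by
        have := lp.norm_apply_le_norm ENNReal.top_ne_zero (F x - F y) n
        rwa [show ‖((F x - F y : lp (fun _ : ℕ => ℝ) ⊤) : ∀ _ : ℕ, ℝ) n‖ = |h x n - h y n| by
          rw [hFsub]; rfl] at this
      calc ‖((f u - f v : lp (fun _ : ℕ => ℝ) ⊤) : ∀ _ : ℕ, ℝ) k‖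
          = (q : ℝ) * |h x n - h y n| := by
            rw [hcoord, Real.norm_eq_abs, abs_mul, abs_of_pos hq0]
        _ ≤ (q : ℝ) * ‖F x - F y‖ := by
            exact mul_le_mul_of_nonneg_left hle hq0.le
    -- conclude
    set N := ‖F x - F y‖ with hNdef
    have hN : 0 ≤ N := norm_nonneg _
    have h1 : ρ / 2 ≤ (q : ℝ) * N := le_trans hfuv hkey2
    have h2 : (q : ℝ) * s * N ≤ t₀ * N := by
      rw [← hddef]; exact mul_le_mul_of_nonneg_right hd2.le hN
    rw [div_mul_eq_mul_div, div_le_iff₀ (by positivity : (0:ℝ) < 2 * t₀)]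
    nlinarith [mul_le_mul_of_nonneg_right h1 hs.le]
  · -- upper bound
    apply lp.norm_le_of_forall_le (mul_nonneg hKr0.le (norm_nonneg _))
    intro n
    rw [hFsub]
    simpa using hbound x y n
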